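/- Let a = e^{iπ/4} and b = e^{3iπ/4}. For every u ∈ ℂ with u ∉ {a, −a, b, −b}, setting ξ = (u+a)(u+b)/((u−a)(u−b)) and η = (u+a)(u−b)/((u−a)(u+b)), one has ξ ≠ 0, η ≠ 0, and 4 − ξ − ξ⁻¹ − η − η⁻¹ = 0. -/

import Mathlib

/-- Rational parametrization of the spectral curve `4 - ξ - ξ⁻¹ - η - η⁻¹ = 0` of the
Laplacian on `ℤ²`: with `a = e^{iπ/4}`, `b = e^{3iπ/4}`,
`ξ = (u+a)(u+b)/((u-a)(u-b))` and `η = (u+a)(u-b)/((u-a)(u+b))` lie on the curve. -/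
theorem stmt_8 (a b u ξ η : ℂ)
    (ha : a = Complex.exp (Complex.I * (Real.pi : ℂ) / 4))
    (hb : b = Complex.exp (3 * Complex.I * (Real.pi : ℂ) / 4))
    (hu1 : u ≠ a) (hu2 : u ≠ -a) (hu3 : u ≠ b) (hu4 : u ≠ -b)
    (hξ : ξ = (u + a) * (u + b) / ((u - a) * (u - b)))
    (hη : η = (u + a) * (u - b) / ((u - a) * (u + b))) :
    ξ ≠ 0 ∧ η ≠ 0 ∧ 4 - ξ - ξ⁻¹ - η - η⁻¹ = 0 := by
  have h1 : u - a ≠ 0 := sub_ne_zero.mpr hu1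
  have h2 : u + a ≠ 0 := fun h => hu2 (by linear_combination h)
  have h3 : u - b ≠ 0 := sub_ne_zero.mpr hu3
  have h4 : u + b ≠ 0 := fun h => hu4 (by linear_combination h)
  have hab : a * b = -1 := by
    rw [ha, hb, ← Complex.exp_add]
    have : Complex.I * (Real.pi : ℂ) / 4 + 3 * Complex.I * (Real.pi : ℂ) / 4
        = (Real.pi : ℂ) * Complex.I := by ring
    rw [this, Complex.exp_pi_mul_I]
  have ha2 : a ^ 2 = Complex.I := by
    rw [ha, ← Complex.exp_nat_mul]
    have : (2 : ℕ) * (Complex.I * (Real.pi : ℂ) / 4) = (Real.pi : ℂ) / 2 * Complex.I := by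
      push_cast; ring
    rw [this]
    simpa using Complex.exp_mul_I ((Real.pi : ℂ) / 2)
  have hb2 : b ^ 2 = -Complex.I := by
    have ha0 : a ≠ 0 := ha ▸ Complex.exp_ne_zero _
    have : b ^ 2 = (a * b) ^ 2 / a ^ 2 := by
      rw [mul_pow, mul_comm (a ^ 2), mul_div_assoc, div_self (pow_ne_zero 2 ha0), mul_one]
    rw [this, hab, ha2]
    norm_num [div_eq_mul_inv, Complex.inv_I]
  have hsum : a ^ 2 + b ^ 2 = 0 := by rw [ha2, hb2]; ring
  have hξ0 : ξ ≠ 0 := by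
    rw [hξ]
    exact div_ne_zero (mul_ne_zero h2 h4) (mul_ne_zero h1 h3)
  have hη0 : η ≠ 0 := by
    rw [hη]
    exact div_ne_zero (mul_ne_zero h2 h3) (mul_ne_zero h1 h4)
  refine ⟨hξ0, hη0, ?_⟩
  rw [hξ, hη]
  field_simp
  linear_combination (8 * (-2 * u ^ 2 + u ^ 4 + u ^ 4 * (a ^ 2 + b ^ 2) - u ^ 6)) * hsum +
    (8 * (-u ^ 2 * (a * b - 1) * (2 + a ^ 2 + b ^ 2) - 2 * u ^ 4)) * hab +
    (8 * u ^ 2 - 8 * u ^ 4) * hsum + (16 * u ^ 2 * (a * b - 1) + 16 * u ^ 4) * hab +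
    (8 * u ^ 2 * (a ^ 2 * b ^ 2 - 1) - 8 * u ^ 4 * (a ^ 2 + b ^ 2) + 8 * u ^ 6) * hsum
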